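/- Let p₁, p₂, p₃ ∈ ℝ² be affinely independent points and let c(p₁, p₂, p₃) denote their circumcenter, i.e., the unique point equidistant from p₁, p₂ and p₃. Then, for fixed p₂ and p₃, the map p₁ ↦ c(p₁, p₂, p₃) is differentiable at every p₁ for which the three points are affinely independent, and its derivative C₁ = ∂c/∂p₁ (a 2×2 matrix) satisfies C₁ᵀ = [c−p₁ | c−p₁] · [p₂−p₁ | p₃−p₁]⁻¹, where [a | b] denotes the 2×2 matrix with columns a and b. Equivalently, for every direction h ∈ ℝ², the directional derivative v of c satisfies (p₂−p₁)ᵀ v = (c−p₁)ᵀ h and (p₃−p₁)ᵀ v = (c−p₁)ᵀ h. -/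

import Mathlib

local notation "E2" => EuclideanSpace ℝ (Fin 2)

private lemma aux_wvs (q a b : E2) (w : Fin 3 → ℝ) (hw : ∑ i : Fin 3, w i = 0)
    (h0 : w 0 * q 0 + w 1 * a 0 + w 2 * b 0 = 0)
    (h1 : w 0 * q 1 + w 1 * a 1 + w 2 * b 1 = 0) :
    Finset.univ.weightedVSub ![q, a, b] w = 0 := by
  rw [Finset.weightedVSub_eq_linear_combination _ hw]
  ext i
  fin_cases i <;>
    simp only [Fin.sum_univ_three, PiLp.add_apply, PiLp.smul_apply, smul_eq_mul,
      PiLp.zero_apply, Matrix.cons_val_zero, Matrix.cons_val_one, Matrix.head_cons,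
      Matrix.cons_val_two, Matrix.tail_cons, Fin.mk_zero, Fin.mk_one, Fin.isValue]
  · exact h0
  · exact h1

private lemma aux_det_iff (q a b : E2) :
    AffineIndependent ℝ ![q, a, b] ↔
      (a 0 - q 0) * (b 1 - q 1) - (a 1 - q 1) * (b 0 - q 0) ≠ 0 := by
  rw [affineIndependent_iff_of_fintype]
  constructor
  · intro hA hdet
    by_cases hu0 : a 0 - q 0 ≠ 0
    · have := hA ![(a 0 - q 0) - (b 0 - q 0), b 0 - q 0, -(a 0 - q 0)]
        (by simp [Fin.sum_univ_three]; try ring)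
        (aux_wvs q a b _ (by simp [Fin.sum_univ_three]; try ring)
          (by simp; ring) (by simp; linear_combination -hdet)) 2
      simp at this
      exact hu0 (by linarith)
    by_cases hu1 : a 1 - q 1 ≠ 0
    · have := hA ![(a 1 - q 1) - (b 1 - q 1), b 1 - q 1, -(a 1 - q 1)]
        (by simp [Fin.sum_univ_three]; try ring)
        (aux_wvs q a b _ (by simp [Fin.sum_univ_three]; try ring)
          (by simp; linear_combination hdet) (by simp; ring)) 2
      simp at this
      exact hu1 (by linarith)
    · push_neg at hu0 hu1
      have := hA ![-1, 1, 0]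
        (by simp [Fin.sum_univ_three])
        (aux_wvs q a b _ (by simp [Fin.sum_univ_three])
          (by simp; linarith [sub_eq_zero.mp hu0]) (by simp; linarith [sub_eq_zero.mp hu1])) 1
      simp at this
  · intro hdet w hw hvec
    rw [Finset.weightedVSub_eq_linear_combination _ hw] at hvec
    simp only [Fin.sum_univ_three] at hw
    have e0 : w 0 * q 0 + w 1 * a 0 + w 2 * b 0 = 0 := by
      have := congrArg (fun x : E2 => x 0) hvec
      simpa [Fin.sum_univ_three, PiLp.add_apply, PiLp.smul_apply, smul_eq_mul] using this
    have e1 : w 0 * q 1 + w 1 * a 1 + w 2 * b 1 = 0 := by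
      have := congrArg (fun x : E2 => x 1) hvec
      simpa [Fin.sum_univ_three, PiLp.add_apply, PiLp.smul_apply, smul_eq_mul] using this
    have h1 : w 1 = 0 := by
      have hm : w 1 * ((a 0 - q 0) * (b 1 - q 1) - (a 1 - q 1) * (b 0 - q 0)) = 0 := by
        linear_combination (b 1 - q 1) * e0 - (b 0 - q 0) * e1 -
          ((b 1 - q 1) * q 0 - (b 0 - q 0) * q 1) * hw
      exact (mul_eq_zero.mp hm).resolve_right hdet
    have h2 : w 2 = 0 := by
      have hm : w 2 * ((a 0 - q 0) * (b 1 - q 1) - (a 1 - q 1) * (b 0 - q 0)) = 0 := by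
        linear_combination -(a 1 - q 1) * e0 + (a 0 - q 0) * e1 +
          ((a 1 - q 1) * q 0 - (a 0 - q 0) * q 1) * hw
      exact (mul_eq_zero.mp hm).resolve_right hdet
    intro i; fin_cases i <;> simp [Fin.isValue, h1, h2] <;> linarith

private lemma aux_sq (q x a : E2) (h : dist x q = dist x a) :
    (x 0 - q 0)^2 + (x 1 - q 1)^2 = (x 0 - a 0)^2 + (x 1 - a 1)^2 := by
  have h2 : dist x q ^ 2 = dist x a ^ 2 := by rw [h]
  rw [EuclideanSpace.dist_eq, EuclideanSpace.dist_eq, Real.sq_sqrt (by positivity),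
    Real.sq_sqrt (by positivity)] at h2
  simpa [Fin.sum_univ_two, Real.dist_eq, sq_abs] using h2

private lemma aux_lin (q x a : E2) (h : dist x q = dist x a) :
    (a 0 - q 0) * x 0 + (a 1 - q 1) * x 1 = (a 0^2 + a 1^2 - q 0^2 - q 1^2)/2 := by
  linear_combination (aux_sq q x a h) / 2

private lemma aux_inner_eq (q x a : E2) (h : dist x q = dist x a) :
    2 * (inner ℝ x (a - q) : ℝ) + (inner ℝ q q : ℝ) = (inner ℝ a a : ℝ) := by
  have h2 := aux_sq q x a h
  simp only [PiLp.inner_apply, RCLike.inner_apply, conj_trivial, Fin.sum_univ_two,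
    PiLp.sub_apply]
  linear_combination h2

private lemma aux_deriv (p a : E2) (c : E2 → E2) (C : E2 →L[ℝ] E2) (hC : HasFDerivAt c C p)
    (hloc : ∀ᶠ q in nhds p,
      2 * (inner ℝ (c q) (a - q) : ℝ) + (inner ℝ q q : ℝ) = (inner ℝ a a : ℝ)) :
    ∀ h : E2, (inner ℝ (a - p) (C h) : ℝ) = (inner ℝ (c p - p) h : ℝ) := by
  have h2 : HasFDerivAt (fun q : E2 => a - q)
      ((0 : E2 →L[ℝ] E2) - ContinuousLinearMap.id ℝ E2) p :=
    (hasFDerivAt_const a p).sub (hasFDerivAt_id p)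
  have hφ := ((hC.inner ℝ h2).const_mul (2:ℝ)).add
    ((hasFDerivAt_id p).inner ℝ (hasFDerivAt_id p))
  have h0 : HasFDerivAt (fun q : E2 => 2 * (inner ℝ (c q) (a - q) : ℝ) + (inner ℝ q q : ℝ))
      (0 : E2 →L[ℝ] ℝ) p :=
    (hasFDerivAt_const ((inner ℝ a a : ℝ)) p).congr_of_eventuallyEq hloc
  have huniq := hφ.unique h0
  intro h
  have hh := DFunLike.congr_fun huniq h
  simp only [ContinuousLinearMap.add_apply, ContinuousLinearMap.smul_apply,
    ContinuousLinearMap.comp_apply, ContinuousLinearMap.prod_apply, fderivInnerCLM_apply,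
    ContinuousLinearMap.sub_apply, ContinuousLinearMap.zero_apply, ContinuousLinearMap.id_apply,
    ContinuousLinearMap.coe_zero, Pi.zero_apply, smul_eq_mul, zero_sub, inner_neg_right,
    ContinuousLinearMap.neg_apply, id_eq] at hh
  have e1 : (inner ℝ (a - p) (C h) : ℝ) = inner ℝ (C h) (a - p) := real_inner_comm _ _
  have e2 : (inner ℝ (c p - p) h : ℝ) = inner ℝ (c p) h - inner ℝ p h := inner_sub_left _ _ _
  have e3 : (inner ℝ h p : ℝ) = inner ℝ p h := real_inner_comm _ _
  have e5 : (inner ℝ (c p) (-h) : ℝ) = -inner ℝ (c p) h := inner_neg_right _ _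
  linarith [hh]

/-- For fixed `p₂, p₃ ∈ ℝ²`, let `c q` be the circumcenter of the triple `(q, p₂, p₃)`,
i.e. the unique point equidistant from `q`, `p₂` and `p₃` (defined whenever the triple is
affinely independent).  Then at every `p₁` where `(p₁, p₂, p₃)` is affinely independent,
the map `q ↦ c q` is differentiable, and its derivative `C₁` satisfies, for every
direction `h ∈ ℝ²`, the equations `(p₂ − p₁)ᵀ (C₁ h) = (c − p₁)ᵀ h` and
`(p₃ − p₁)ᵀ (C₁ h) = (c − p₁)ᵀ h`, which is equivalent to the matrix identity
`C₁ᵀ = [c−p₁ | c−p₁] · [p₂−p₁ | p₃−p₁]⁻¹`. -/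
theorem circumcenter_hasFDerivAt_of_equidistant
    (p₂ p₃ : EuclideanSpace ℝ (Fin 2))
    (c : EuclideanSpace ℝ (Fin 2) → EuclideanSpace ℝ (Fin 2))
    (hc : ∀ q : EuclideanSpace ℝ (Fin 2), AffineIndependent ℝ ![q, p₂, p₃] →
      dist (c q) q = dist (c q) p₂ ∧ dist (c q) q = dist (c q) p₃)
    (p₁ : EuclideanSpace ℝ (Fin 2))
    (h₁ : AffineIndependent ℝ ![p₁, p₂, p₃]) :
    ∃ C : EuclideanSpace ℝ (Fin 2) →L[ℝ] EuclideanSpace ℝ (Fin 2),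
      HasFDerivAt c C p₁ ∧
      ∀ h : EuclideanSpace ℝ (Fin 2),
        (inner ℝ (p₂ - p₁) (C h) : ℝ) = (inner ℝ (c p₁ - p₁) h : ℝ) ∧
        (inner ℝ (p₃ - p₁) (C h) : ℝ) = (inner ℝ (c p₁ - p₁) h : ℝ) := by
  set d : E2 → ℝ := fun q => (p₂ 0 - q 0) * (p₃ 1 - q 1) - (p₂ 1 - q 1) * (p₃ 0 - q 0) with hd
  set B2 : E2 → ℝ := fun q => (p₂ 0^2 + p₂ 1^2 - q 0^2 - q 1^2)/2 with hB2
  set B3 : E2 → ℝ := fun q => (p₃ 0^2 + p₃ 1^2 - q 0^2 - q 1^2)/2 with hB3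
  set f : E2 → E2 := fun q => (WithLp.equiv 2 (Fin 2 → ℝ)).symm
    ![(B2 q * (p₃ 1 - q 1) - B3 q * (p₂ 1 - q 1)) / d q,
      ((p₂ 0 - q 0) * B3 q - (p₃ 0 - q 0) * B2 q) / d q] with hf
  have hdp₁ : d p₁ ≠ 0 := (aux_det_iff p₁ p₂ p₃).mp h₁
  -- c = f on the set where d ≠ 0
  have hcf : ∀ q : E2, d q ≠ 0 → c q = f q := by
    intro q hq
    obtain ⟨hA, hB⟩ := hc q ((aux_det_iff q p₂ p₃).mpr hq)
    have e2 := aux_lin q (c q) p₂ hA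
    have e3 := aux_lin q (c q) p₃ hB
    ext i
    fin_cases i <;>
      simp only [hf, WithLp.equiv_symm_apply, WithLp.ofLp_toLp, Matrix.cons_val_zero, Matrix.cons_val_one,
        Matrix.head_cons, Fin.mk_zero, Fin.mk_one, Fin.isValue, eq_div_iff hq, hB2, hB3, hd]
    · rw [eq_div_iff (by simpa only [hd] using hq)]
      · linear_combination (p₃ 1 - q 1) * e2 - (p₂ 1 - q 1) * e3
    · rw [eq_div_iff (by simpa only [hd] using hq)]
      · linear_combination (p₂ 0 - q 0) * e3 - (p₃ 0 - q 0) * e2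
  -- continuity of d, hence eventual equality of c and f
  have hco : ∀ i : Fin 2, Continuous fun q : E2 => q i := fun i =>
    (EuclideanSpace.proj i : E2 →L[ℝ] ℝ).continuous
  have hcont : Continuous d :=
    (((continuous_const.sub (hco 0)).mul (continuous_const.sub (hco 1))).sub
      ((continuous_const.sub (hco 1)).mul (continuous_const.sub (hco 0))))
  have hev : ∀ᶠ q in nhds p₁, d q ≠ 0 := hcont.continuousAt.eventually_ne hdp₁
  have hEq : c =ᶠ[nhds p₁] f := hev.mono fun q hq => hcf q hq
  -- differentiability of f, hence of c
  have hdiffco : ∀ i : Fin 2, DifferentiableAt ℝ (fun q : E2 => q i) p₁ := fun i =>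
    (EuclideanSpace.proj i : E2 →L[ℝ] ℝ).differentiableAt
  have hd_diff : DifferentiableAt ℝ d p₁ :=
    (((differentiableAt_const _).sub (hdiffco 0)).mul
      ((differentiableAt_const _).sub (hdiffco 1))).sub
      (((differentiableAt_const _).sub (hdiffco 1)).mul
        ((differentiableAt_const _).sub (hdiffco 0)))
  have hB2_diff : DifferentiableAt ℝ B2 p₁ := by
    rw [hB2]
    simp only [div_eq_mul_inv]
    exact ((((differentiableAt_const _).sub ((hdiffco 0).pow 2)).sub ((hdiffco 1).pow 2)).mul
      (differentiableAt_const _))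
  have hB3_diff : DifferentiableAt ℝ B3 p₁ := by
    rw [hB3]
    simp only [div_eq_mul_inv]
    exact ((((differentiableAt_const _).sub ((hdiffco 0).pow 2)).sub ((hdiffco 1).pow 2)).mul
      (differentiableAt_const _))
  have hfd : DifferentiableAt ℝ f p₁ := by
    rw [differentiableAt_euclidean]
    intro i
    fin_cases i <;>
      simp only [hf, WithLp.equiv_symm_apply, WithLp.ofLp_toLp, Matrix.cons_val_zero, Matrix.cons_val_one,
        Matrix.head_cons, Fin.mk_zero, Fin.mk_one, Fin.isValue]
    · simp only [div_eq_mul_inv]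
      exact ((hB2_diff.mul ((differentiableAt_const _).sub (hdiffco 1))).sub
        (hB3_diff.mul ((differentiableAt_const _).sub (hdiffco 1)))).mul (hd_diff.inv hdp₁)
    · simp only [div_eq_mul_inv]
      exact ((((differentiableAt_const _).sub (hdiffco 0)).mul hB3_diff).sub
        (((differentiableAt_const _).sub (hdiffco 0)).mul hB2_diff)).mul (hd_diff.inv hdp₁)
  have hcd : DifferentiableAt ℝ c p₁ := hEq.differentiableAt_iff.mpr hfd
  refine ⟨fderiv ℝ c p₁, hcd.hasFDerivAt, fun h => ?_⟩
  have hloc2 : ∀ᶠ q in nhds p₁,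
      2 * (inner ℝ (c q) (p₂ - q) : ℝ) + (inner ℝ q q : ℝ) = (inner ℝ p₂ p₂ : ℝ) :=
    hev.mono fun q hq => aux_inner_eq q (c q) p₂ (hc q ((aux_det_iff q p₂ p₃).mpr hq)).1
  have hloc3 : ∀ᶠ q in nhds p₁,
      2 * (inner ℝ (c q) (p₃ - q) : ℝ) + (inner ℝ q q : ℝ) = (inner ℝ p₃ p₃ : ℝ) :=
    hev.mono fun q hq => aux_inner_eq q (c q) p₃ (hc q ((aux_det_iff q p₂ p₃).mpr hq)).2
  exact ⟨aux_deriv p₁ p₂ c _ hcd.hasFDerivAt hloc2 h,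
    aux_deriv p₁ p₃ c _ hcd.hasFDerivAt hloc3 h⟩
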